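/- If e is an edge of a graph G that belongs to a set P of at least k+1 induced P_4's of G such that any two distinct P_4's in P share only the edge e (their edge sets pairwise intersect exactly in {e}), and G can be made P_4-free by deleting at most k edges, then every edge-deletion set of size at most k contains e. -/
import Mathlib


variable {V : Type*}

/-- `{a,b,c,d}` induces a path `a - b - c - d` on four vertices in `G`. -/
def IsInducedP4 (G : SimpleGraph V) (a b c d : V) : Prop :=
  a ≠ b ∧ a ≠ c ∧ a ≠ d ∧ b ≠ c ∧ b ≠ d ∧ c ≠ d ∧
  G.Adj a b ∧ G.Adj b c ∧ G.Adj c d ∧ ¬ G.Adj a c ∧ ¬ G.Adj a d ∧ ¬ G.Adj b d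

/-- `G` has no induced path on four vertices. -/
def P4Free (G : SimpleGraph V) : Prop := ∀ a b c d : V, ¬ IsInducedP4 G a b c d

/-- `M` is a module of `G`: every vertex outside `M` is adjacent to all or none of `M`. -/
def IsModule (G : SimpleGraph V) (M : Set V) : Prop :=
  ∀ x ∉ M, (∀ v ∈ M, G.Adj x v) ∨ (∀ v ∈ M, ¬ G.Adj x v)

/-- `F` is an edge-deletion set of `G`: a set of edges whose removal makes `G` `P₄`-free. -/
def IsDelSet (G : SimpleGraph V) (F : Set (Sym2 V)) : Prop :=
  F ⊆ G.edgeSet ∧ P4Free (G.deleteEdges F)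

/-- `F` is an optimal (minimum-cardinality) edge-deletion set of `G`. -/
def IsOptDelSet (G : SimpleGraph V) (F : Set (Sym2 V)) : Prop :=
  IsDelSet G F ∧ ∀ F' : Set (Sym2 V), IsDelSet G F' → F.ncard ≤ F'.ncard

/-- The three edges of the path `a - b - c - d`. -/
def p4Edges (a b c d : V) : Set (Sym2 V) := {s(a, b), s(b, c), s(c, d)}

lemma hit_aux (G : SimpleGraph V) (F : Set (Sym2 V)) (a b c d : V)
    (h : IsInducedP4 G a b c d) (hfree : P4Free (G.deleteEdges F)) :
    ∃ s ∈ F, s ∈ p4Edges a b c d := by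
  by_contra hc
  push_neg at hc
  obtain ⟨h1, h2, h3, h4, h5, h6, hab, hbc, hcd, nac, nad, nbd⟩ := h
  refine hfree a b c d ⟨h1, h2, h3, h4, h5, h6, ?_, ?_, ?_,
    fun h => nac (SimpleGraph.deleteEdges_adj.1 h).1,
    fun h => nad (SimpleGraph.deleteEdges_adj.1 h).1,
    fun h => nbd (SimpleGraph.deleteEdges_adj.1 h).1⟩ <;>
  rw [SimpleGraph.deleteEdges_adj]
  · exact ⟨hab, fun hs => hc _ hs (by simp [p4Edges])⟩
  · exact ⟨hbc, fun hs => hc _ hs (by simp [p4Edges])⟩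
  · exact ⟨hcd, fun hs => hc _ hs (by simp [p4Edges])⟩

theorem stmt13 [Finite V] (G : SimpleGraph V) (e : Sym2 V) (he : e ∈ G.edgeSet) (k : ℕ)
    (P : Set (V × V × V × V)) (hcard : k + 1 ≤ P.ncard)
    (hP4 : ∀ p ∈ P, IsInducedP4 G p.1 p.2.1 p.2.2.1 p.2.2.2 ∧
      e ∈ p4Edges p.1 p.2.1 p.2.2.1 p.2.2.2)
    (hpair : ∀ p ∈ P, ∀ q ∈ P, p ≠ q →
      p4Edges p.1 p.2.1 p.2.2.1 p.2.2.2 ∩ p4Edges q.1 q.2.1 q.2.2.1 q.2.2.2 = {e})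
    (hyes : ∃ F : Set (Sym2 V), IsDelSet G F ∧ F.ncard ≤ k) :
    ∀ F : Set (Sym2 V), IsDelSet G F → F.ncard ≤ k → e ∈ F := by
  intro F hF hFk
  by_contra heF
  -- choose for each p ∈ P an edge of p in F; it is ≠ e
  have hchoose : ∀ p ∈ P, ∃ s ∈ F, s ∈ p4Edges p.1 p.2.1 p.2.2.1 p.2.2.2 := by
    intro p hp
    exact hit_aux G F _ _ _ _ (hP4 p hp).1 hF.2
  choose f hfF hfE using hchoose
  have hne : ∀ p (hp : p ∈ P), f p hp ≠ e := fun p hp h => heF (h ▸ hfF p hp)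
  -- f is injective on P
  classical
  set g : (V × V × V × V) → Sym2 V := fun p => if hp : p ∈ P then f p hp else e with hg
  have hinj : Set.InjOn g P := by
    intro p hp q hq hpq
    by_contra hne'
    simp only [hg, dif_pos hp, dif_pos hq] at hpq
    have : f p hp ∈ p4Edges p.1 p.2.1 p.2.2.1 p.2.2.2 ∩
        p4Edges q.1 q.2.1 q.2.2.1 q.2.2.2 := ⟨hfE p hp, hpq ▸ hfE q hq⟩
    rw [hpair p hp q hq hne'] at this
    exact hne p hp this
  have hsub : g '' P ⊆ F := by
    rintro s ⟨p, hp, rfl⟩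
    simp only [hg, dif_pos hp]
    exact hfF p hp
  have hFfin : F.Finite := Set.toFinite F
  have h1 : P.ncard = (g '' P).ncard := (Set.ncard_image_of_injOn hinj).symm
  have h2 : (g '' P).ncard ≤ F.ncard := Set.ncard_le_ncard hsub hFfin
  omega
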